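/- Let X_1,...,X_m be nonempty closed convex subsets of R^n whose intersection X contains a closed ball of radius δ > 0 centered at x̄. Let x^i ∈ X_i and x̂ = (1/m)∑ x^i. Then dist(x̂, X) ≤ (1/(δm)) (∑_j ||x^j - x̄||)(∑_j dist(x̂, X_j)). -/

import Mathlib

set_option maxHeartbeats 1000000


theorem stmt3 {n m : ℕ} (hm : 0 < m) (X : Fin m → Set (EuclideanSpace ℝ (Fin n)))
    (hne : ∀ i, (X i).Nonempty) (hcl : ∀ i, IsClosed (X i)) (hconv : ∀ i, Convex ℝ (X i))
    (δ : ℝ) (hδ : 0 < δ) (xbar : EuclideanSpace ℝ (Fin n))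
    (hball : Metric.closedBall xbar δ ⊆ ⋂ i, X i)
    (x : Fin m → EuclideanSpace ℝ (Fin n)) (hx : ∀ i, x i ∈ X i)
    (xhat : EuclideanSpace ℝ (Fin n)) (hxhat : xhat = (m : ℝ)⁻¹ • ∑ i, x i) :
    Metric.infDist xhat (⋂ i, X i) ≤
      (1 / (δ * m)) * (∑ j, ‖x j - xbar‖) * (∑ j, Metric.infDist xhat (X j)) := by
  have hm' : (0:ℝ) < m := by exact_mod_cast hm
  set D := ∑ j, Metric.infDist xhat (X j) with hD
  have hDnn : 0 ≤ D := Finset.sum_nonneg fun j _ => Metric.infDist_nonneg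
  have hRnn : 0 ≤ ∑ j, ‖x j - xbar‖ := Finset.sum_nonneg fun j _ => norm_nonneg _
  have hxbar : xbar ∈ ⋂ i, X i := hball (Metric.mem_closedBall_self hδ.le)
  have hnorm : ‖xhat - xbar‖ ≤ (m:ℝ)⁻¹ * ∑ j, ‖x j - xbar‖ := by
    have heq : xhat - xbar = (m:ℝ)⁻¹ • ∑ j, (x j - xbar) := by
      rw [hxhat, Finset.sum_sub_distrib, smul_sub, Finset.sum_const, Finset.card_univ,
        Fintype.card_fin]
      congr 1
      rw [← Nat.cast_smul_eq_nsmul ℝ, smul_smul, inv_mul_cancel₀ (ne_of_gt hm'), one_smul]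
    calc ‖xhat - xbar‖ = (m:ℝ)⁻¹ * ‖∑ j, (x j - xbar)‖ := by
          rw [heq, norm_smul, Real.norm_eq_abs, abs_of_pos (by positivity)]
      _ ≤ (m:ℝ)⁻¹ * ∑ j, ‖x j - xbar‖ := by
          gcongr
          exact norm_sum_le _ _
  rcases eq_or_lt_of_le hDnn with hD0 | hDpos
  · -- D = 0 : xhat ∈ every X i
    have hmem : xhat ∈ ⋂ i, X i := by
      rw [Set.mem_iInter]
      intro i
      have hz : Metric.infDist xhat (X i) = 0 := by
        have h1 : Metric.infDist xhat (X i) ≤ D :=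
          hD ▸ Finset.single_le_sum (fun j _ => Metric.infDist_nonneg) (Finset.mem_univ i)
        linarith [Metric.infDist_nonneg (x := xhat) (s := X i)]
      exact ((hcl i).mem_iff_infDist_zero (hne i)).2 hz
    rw [Metric.infDist_zero_of_mem hmem, ← hD0]
    simp
  · -- D > 0
    set t := D / (D + δ) with ht
    have hden : 0 < D + δ := by linarith
    have ht0 : 0 < t := div_pos hDpos hden
    have ht1 : t < 1 := (div_lt_one hden).2 (by linarith)
    have h1t : 1 - t = δ / (D + δ) := by rw [ht]; field_simp; ring
    set z := t • xbar + (1 - t) • xhat with hz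
    have hzmem : z ∈ ⋂ i, X i := by
      rw [Set.mem_iInter]
      intro i
      obtain ⟨p, hp, hdp⟩ := (hcl i).exists_infDist_eq_dist (hne i) xhat
      have hdile : Metric.infDist xhat (X i) ≤ D :=
        hD ▸ Finset.single_le_sum (fun j _ => Metric.infDist_nonneg) (Finset.mem_univ i)
      set q := xbar + ((1 - t) / t) • (xhat - p) with hq
      have hqmem : q ∈ X i := by
        have : q ∈ Metric.closedBall xbar δ := by
          rw [Metric.mem_closedBall, dist_eq_norm]
          have : q - xbar = ((1 - t) / t) • (xhat - p) := by rw [hq]; abel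
          rw [this, norm_smul, Real.norm_eq_abs, abs_of_nonneg
            (div_nonneg (by linarith) ht0.le)]
          have hratio : (1 - t) / t = δ / D := by
            rw [h1t, ht]
            field_simp
          rw [hratio]
          have hnp : ‖xhat - p‖ = Metric.infDist xhat (X i) := by
            rw [hdp, dist_eq_norm]
          rw [hnp]
          calc δ / D * Metric.infDist xhat (X i) ≤ δ / D * D := by
                exact mul_le_mul_of_nonneg_left hdile (div_nonneg hδ.le hDnn)
            _ = δ := div_mul_cancel₀ δ (ne_of_gt hDpos)
        exact Set.mem_iInter.1 (hball this) i
      have hcomb : z = t • q + (1 - t) • p := by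
        rw [hq, hz, smul_add, smul_smul, mul_div_cancel₀ _ (ne_of_gt ht0)]
        module
      rw [hcomb]
      exact hconv i hqmem hp ht0.le (by linarith) (by ring)
    have hle : Metric.infDist xhat (⋂ i, X i) ≤ dist xhat z :=
      Metric.infDist_le_dist_of_mem hzmem
    have hdz : dist xhat z = t * ‖xhat - xbar‖ := by
      rw [dist_eq_norm]
      have : xhat - z = t • (xhat - xbar) := by rw [hz]; module
      rw [this, norm_smul, Real.norm_eq_abs, abs_of_pos ht0]
    have htle : t ≤ D / δ := by
      rw [ht, div_le_div_iff₀ hden hδ]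
      nlinarith
    calc Metric.infDist xhat (⋂ i, X i) ≤ t * ‖xhat - xbar‖ := by rw [← hdz]; exact hle
      _ ≤ (D / δ) * ((m:ℝ)⁻¹ * ∑ j, ‖x j - xbar‖) := by
          apply mul_le_mul htle hnorm (norm_nonneg _) (by positivity)
      _ = (1 / (δ * m)) * (∑ j, ‖x j - xbar‖) * D := by field_simp
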